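/- In a commutative reduced ring R, a nonzero ideal I is essential if and only if the interior of V(I) in Min(R) (Zariski topology) is empty. -/

import Mathlib

/-- The minimal prime spectrum of `R`, with the subspace (Zariski) topology. -/
abbrev MinSpec (R : Type*) [CommRing R] :=
  {P : PrimeSpectrum R // P.asIdeal ∈ minimalPrimes R}

lemma eq_zero_of_mem_all_minimalPrimes {R : Type*} [CommRing R] [IsReduced R] {x : R}
    (h : ∀ P ∈ minimalPrimes R, x ∈ P) : x = 0 := by
  have hx : x ∈ sInf (minimalPrimes R) := Submodule.mem_sInf.mpr h
  rw [minimalPrimes, Ideal.sInf_minimalPrimes] at hx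
  have : IsNilpotent x := by
    rw [← mem_nilradical]
    simpa [nilradical] using hx
  exact this.eq_zero

/-- A nonzero ideal is essential iff the interior of V(I) in Min(R) is empty. -/
theorem essential_iff_interior_vanishing_empty (R : Type*) [CommRing R] [IsReduced R]
    (I : Ideal R) (hI : I ≠ ⊥) :
    (∀ J : Ideal R, J ≠ ⊥ → I ⊓ J ≠ ⊥) ↔
      interior {P : MinSpec R | I ≤ P.1.asIdeal} = ∅ := by
  constructor
  · intro hess
    by_contra hne
    obtain ⟨x, hx⟩ := Set.nonempty_iff_ne_empty.mpr hne
    -- interior is open, x in it; pull back to a basic open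
    obtain ⟨V, hVopen, hVeq⟩ := isOpen_induced_iff.mp (isOpen_interior
      (s := {P : MinSpec R | I ≤ P.1.asIdeal}))
    have hxV : (x : PrimeSpectrum R) ∈ V := by
      rw [← hVeq] at hx; exact hx
    obtain ⟨a, haB⟩ := PrimeSpectrum.isTopologicalBasis_basic_opens (R := R)
      |>.exists_subset_of_mem_open hxV hVopen |>.imp (fun _ h => h)
    obtain ⟨⟨a', rfl⟩, hxa, haV⟩ := haB
    -- a := a' ; a ∉ x.1, and every minimal prime not containing a' contains I
    have ha_ne : a' ≠ 0 := by
      intro h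
      apply (PrimeSpectrum.mem_basicOpen a' _).mp hxa
      rw [h]; exact (x : PrimeSpectrum R).asIdeal.zero_mem
    have key : ∀ i ∈ I, a' * i = 0 := by
      intro i hi
      apply eq_zero_of_mem_all_minimalPrimes
      intro P hP
      haveI hPprime : P.IsPrime := hP.1.1
      by_cases haP : a' ∈ P
      · exact Ideal.mul_mem_right _ _ haP
      · have hmem : (⟨⟨P, hPprime⟩, hP⟩ : MinSpec R) ∈
            {Q : MinSpec R | I ≤ Q.1.asIdeal} := by
          have : (⟨P, hPprime⟩ : PrimeSpectrum R) ∈ V :=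
            haV ((PrimeSpectrum.mem_basicOpen a' _).mpr haP)
          have := interior_subset (s := {Q : MinSpec R | I ≤ Q.1.asIdeal})
          apply this
          rw [← hVeq]
          exact ‹(⟨P, hPprime⟩ : PrimeSpectrum R) ∈ V›
        exact Ideal.mul_mem_left _ _ (hmem hi)
    -- J = span {a'} works
    refine hess (Ideal.span {a'}) ?_ ?_
    · intro h
      exact ha_ne (by simpa [h] using Ideal.subset_span (s := {a'}) rfl)
    · apply (Submodule.eq_bot_iff _).mpr
      rintro y ⟨hyI, hyJ⟩
      obtain ⟨r, rfl⟩ := Ideal.mem_span_singleton'.mp hyJ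
      have : (r * a') * (r * a') = 0 := by
        have h0 := key _ hyI
        calc (r * a') * (r * a') = r * (a' * (r * a')) := by ring
        _ = 0 := by rw [h0, mul_zero]
      exact IsReduced.eq_zero _ ⟨2, by rw [pow_two]; exact this⟩
  · intro hint
    intro J hJ hIJ
    -- pick a ∈ J, a ≠ 0
    obtain ⟨a, haJ, ha0⟩ := Submodule.exists_mem_ne_zero_of_ne_bot hJ
    -- a annihilates I
    have key : ∀ i ∈ I, a * i = 0 := by
      intro i hi
      have : a * i ∈ I ⊓ J := ⟨Ideal.mul_mem_left _ _ hi, Ideal.mul_mem_right _ _ haJ⟩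
      rw [hIJ] at this
      exact this
    -- exists minimal prime not containing a
    have : ¬ ∀ P ∈ minimalPrimes R, a ∈ P := fun h => ha0 (eq_zero_of_mem_all_minimalPrimes h)
    push_neg at this
    obtain ⟨P, hP, haP⟩ := this
    haveI hPprime : P.IsPrime := hP.1.1
    set x : MinSpec R := ⟨⟨P, hPprime⟩, hP⟩
    have hxint : x ∈ interior {Q : MinSpec R | I ≤ Q.1.asIdeal} := by
      apply mem_interior.mpr
      refine ⟨Subtype.val ⁻¹' (PrimeSpectrum.basicOpen a : Set (PrimeSpectrum R)), ?_, ?_, ?_⟩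
      · rintro Q hQ i hi
        by_contra hiQ
        exact (PrimeSpectrum.mem_basicOpen a _).mp hQ
          (Q.1.isPrime.mem_or_mem (by rw [key i hi]; exact Q.1.asIdeal.zero_mem)
            |>.resolve_right hiQ)
      · exact (PrimeSpectrum.basicOpen a).2.preimage continuous_subtype_val
      · exact (PrimeSpectrum.mem_basicOpen a _).mpr haP
    rw [hint] at hxint
    exact hxint
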